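/- Let P be a finitely generated, cancellative, torsion-free and saturated commutative additive monoid, and let I be a prime monoid ideal of P. Then there exists an additive monoid homomorphism u : P → ℝ≥0 such that u p > 0 for every p ∈ I and u p = 0 for every p ∉ I. -/

import Mathlib

open scoped NNReal

/-- A monoid ideal of a commutative additive monoid `P`: a subset `I` such that
`p + q ∈ I` whenever `p ∈ I` and `q ∈ P`. -/
def IsMonoidIdeal {P : Type*} [AddCommMonoid P] (I : Set P) : Prop :=
  ∀ p ∈ I, ∀ q : P, p + q ∈ I

/-- A prime monoid ideal: a monoid ideal whose complement is an additive submonoid. -/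
def IsPrimeMonoidIdeal {P : Type*} [AddCommMonoid P] (I : Set P) : Prop :=
  IsMonoidIdeal I ∧ (0 : P) ∉ I ∧ ∀ p q : P, p ∉ I → q ∉ I → p + q ∉ I

open Finset

private lemma sum_lin {ι : Type} [Fintype ι] (f g : ι → ℤ) (c₁ c₂ : ℤ) :
    ∑ j, (c₁ * f j - c₂ * g j) = c₁ * ∑ j, f j - c₂ * ∑ j, g j := by
  rw [Finset.sum_sub_distrib, Finset.mul_sum, Finset.mul_sum]

private lemma sum_linR {ι : Type} [Fintype ι] (f g : ι → ℝ) (c₁ c₂ : ℝ) :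
    ∑ j, (c₁ * f j - c₂ * g j) = c₁ * ∑ j, f j - c₂ * ∑ j, g j := by
  rw [Finset.sum_sub_distrib, Finset.mul_sum, Finset.mul_sum]

private lemma ip_snoc (d : ℕ) (x : Fin (d+1) → ℤ) (u' : Fin d → ℝ) (t : ℝ) :
    ∑ i, (x i : ℝ) * (Fin.snoc u' t : Fin (d+1) → ℝ) i
      = (∑ i, (x (Fin.castSucc i) : ℝ) * u' i) + (x (Fin.last d) : ℝ) * t := by
  rw [Fin.sum_univ_castSucc]; simp

private lemma exists_between_fam {A B : Type} [Fintype A] [Fintype B] (f : A → ℝ) (g : B → ℝ)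
    (h : ∀ a b, f a < g b) : ∃ t : ℝ, (∀ a, f a < t) ∧ (∀ b, t < g b) := by
  classical
  rcases isEmpty_or_nonempty A with hA | hA
  · rcases isEmpty_or_nonempty B with hB | hB
    · exact ⟨0, fun a => (hA.false a).elim, fun b => (hB.false b).elim⟩
    · refine ⟨(univ.inf' univ_nonempty g) - 1, fun a => (hA.false a).elim, fun b => ?_⟩
      have : univ.inf' univ_nonempty g ≤ g b := inf'_le _ (mem_univ b)
      linarith
  · rcases isEmpty_or_nonempty B with hB | hB
    · refine ⟨(univ.sup' univ_nonempty f) + 1, fun a => ?_, fun b => (hB.false b).elim⟩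
      have : f a ≤ univ.sup' univ_nonempty f := le_sup' _ (mem_univ a)
      linarith
    · have hlt : univ.sup' univ_nonempty f < univ.inf' univ_nonempty g := by
        rw [Finset.sup'_lt_iff]
        intro a _
        rw [Finset.lt_inf'_iff]
        intro b _
        exact h a b
      refine ⟨(univ.sup' univ_nonempty f + univ.inf' univ_nonempty g)/2, fun a => ?_, fun b => ?_⟩
      · have : f a ≤ univ.sup' univ_nonempty f := le_sup' _ (mem_univ a)
        linarith
      · have : univ.inf' univ_nonempty g ≤ g b := inf'_le _ (mem_univ b)
        linarith


private lemma motzkin : ∀ (d : ℕ) {ι κ : Type} [Fintype ι] [Fintype κ]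
    (a : ι → Fin d → ℤ) (b : κ → Fin d → ℤ),
    (∀ (n : ι → ℕ) (z : κ → ℤ),
        (∑ j, (n j : ℤ) • a j) + (∑ k, z k • b k) = 0 → ∀ j, n j = 0) →
    ∃ u : Fin d → ℝ, (∀ j, 0 < ∑ i, (a j i : ℝ) * u i) ∧ (∀ k, ∑ i, (b k i : ℝ) * u i = 0) := by
  intro d
  induction d with
  | zero =>
    intro ι κ _ _ a b hcert
    classical
    refine ⟨0, fun j => ?_, fun k => by simp⟩
    have h1 := hcert (fun j' => if j' = j then 1 else 0) 0 (by funext i; exact i.elim0) j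
    simp at h1
  | succ d IH =>
    intro ι κ _ _ a b hcert
    classical
    by_cases hex : ∃ k₀, b k₀ (Fin.last d) ≠ 0
    · obtain ⟨k₀, he⟩ := hex
      set e : ℤ := b k₀ (Fin.last d) with hedef
      set a' : ι → Fin d → ℤ :=
        fun j i => e * e * a j i.castSucc - a j (Fin.last d) * e * b k₀ i.castSucc with ha'
      set b' : κ → Fin d → ℤ :=
        fun k i => e * b k i.castSucc - b k (Fin.last d) * b k₀ i.castSucc with hb'
      have hcert' : ∀ (n : ι → ℕ) (z : κ → ℤ),
          (∑ j, (n j : ℤ) • a' j) + (∑ k, z k • b' k) = 0 → ∀ j, n j = 0 := by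
        intro n z h0 j
        set C : ℤ := -((∑ j, (n j : ℤ) * a j (Fin.last d)) * e) - (∑ k, z k * b k (Fin.last d))
          with hC
        have key : (∑ j, ((n j * (e.natAbs * e.natAbs) : ℕ) : ℤ) • a j)
            + (∑ k, (z k * e + (if k = k₀ then C else 0)) • b k) = 0 := by
          funext i
          simp only [Finset.sum_apply, Pi.add_apply, Pi.smul_apply, smul_eq_mul, Pi.zero_apply,
            Nat.cast_mul, Int.natAbs_mul_self']
          induction i using Fin.lastCases with
          | last =>
            have h1 : ∑ j, (n j : ℤ) * (e * e) * a j (Fin.last d)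
                = (e * e) * ∑ j, (n j : ℤ) * a j (Fin.last d) := by
              rw [Finset.mul_sum]; exact Finset.sum_congr rfl fun j _ => by ring
            have h2 : ∑ k, (z k * e + (if k = k₀ then C else 0)) * b k (Fin.last d)
                = e * (∑ k, z k * b k (Fin.last d)) + C * e := by
              simp only [add_mul, Finset.sum_add_distrib, ite_mul, zero_mul]
              rw [Finset.sum_ite_eq' univ k₀ (fun k => C * b k (Fin.last d))]
              simp only [mem_univ, if_true, ← hedef]
              congr 1
              rw [Finset.mul_sum]; exact Finset.sum_congr rfl fun k _ => by ring
            rw [h1, h2, hC]; ring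
          | cast i =>
            have h0i := congrFun h0 i
            simp only [Finset.sum_apply, Pi.add_apply, Pi.smul_apply, smul_eq_mul, Pi.zero_apply,
              ha', hb'] at h0i
            have e1 : ∑ j, (n j : ℤ) * (e * e * a j i.castSucc - a j (Fin.last d) * e * b k₀ i.castSucc)
                = (e * e) * (∑ j, (n j : ℤ) * a j i.castSucc)
                  - (e * b k₀ i.castSucc) * (∑ j, (n j : ℤ) * a j (Fin.last d)) := by
              rw [← sum_lin]; exact Finset.sum_congr rfl fun j _ => by ring
            have e2 : ∑ k, z k * (e * b k i.castSucc - b k (Fin.last d) * b k₀ i.castSucc)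
                = e * (∑ k, z k * b k i.castSucc)
                  - (b k₀ i.castSucc) * (∑ k, z k * b k (Fin.last d)) := by
              rw [← sum_lin]; exact Finset.sum_congr rfl fun k _ => by ring
            rw [e1, e2] at h0i
            have g1 : ∑ j, (n j : ℤ) * (e * e) * a j i.castSucc
                = (e * e) * (∑ j, (n j : ℤ) * a j i.castSucc) := by
              rw [Finset.mul_sum]; exact Finset.sum_congr rfl fun j _ => by ring
            have g2 : ∑ k, (z k * e + (if k = k₀ then C else 0)) * b k i.castSucc
                = e * (∑ k, z k * b k i.castSucc) + C * b k₀ i.castSucc := by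
              simp only [add_mul, Finset.sum_add_distrib, ite_mul, zero_mul]
              rw [Finset.sum_ite_eq' univ k₀ (fun k => C * b k i.castSucc)]
              simp only [mem_univ, if_true]
              congr 1
              rw [Finset.mul_sum]; exact Finset.sum_congr rfl fun k _ => by ring
            rw [g1, g2, hC]
            linear_combination h0i
        have hz := hcert _ _ key j
        have hna : e.natAbs ≠ 0 := Int.natAbs_ne_zero.mpr he
        simpa [Nat.mul_eq_zero, hna] using hz
      obtain ⟨u', hu1, hu2⟩ := IH a' b' hcert'
      have heR : (e : ℝ) ≠ 0 := Int.cast_ne_zero.mpr he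
      set B : ℝ := ∑ i, (b k₀ (Fin.castSucc i) : ℝ) * u' i with hB
      set t : ℝ := -B / e with ht
      have hte : t * e = -B := by rw [ht]; field_simp
      refine ⟨Fin.snoc u' t, fun j => ?_, fun k => ?_⟩
      · rw [ip_snoc]
        have h := hu1 j
        have hx : ∑ i, (a' j i : ℝ) * u' i
            = (e * e : ℝ) * (∑ i, (a j (Fin.castSucc i) : ℝ) * u' i)
              - ((a j (Fin.last d) : ℝ) * e) * B := by
          rw [hB, ← sum_linR]
          refine Finset.sum_congr rfl fun i _ => ?_
          simp only [ha']
          push_cast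
          ring
        rw [hx] at h
        have heq : ((e:ℝ) * e) * ((∑ i, (a j (Fin.castSucc i) : ℝ) * u' i) + (a j (Fin.last d) : ℝ) * t)
            = (e * e : ℝ) * (∑ i, (a j (Fin.castSucc i) : ℝ) * u' i)
              - ((a j (Fin.last d) : ℝ) * e) * B := by
          linear_combination ((a j (Fin.last d) : ℝ) * (e:ℝ)) * hte
        have h2 : (0:ℝ) < ((e:ℝ) * e) * ((∑ i, (a j (Fin.castSucc i) : ℝ) * u' i) + (a j (Fin.last d) : ℝ) * t) := by
          rw [heq]; exact h
        nlinarith [h2, mul_self_pos.mpr heR]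
      · rw [ip_snoc]
        have h := hu2 k
        have hx : ∑ i, (b' k i : ℝ) * u' i
            = (e : ℝ) * (∑ i, (b k (Fin.castSucc i) : ℝ) * u' i)
              - (b k (Fin.last d) : ℝ) * B := by
          rw [hB, ← sum_linR]
          refine Finset.sum_congr rfl fun i _ => ?_
          simp only [hb']
          push_cast
          ring
        rw [hx] at h
        have : (e:ℝ) * ((∑ i, (b k (Fin.castSucc i) : ℝ) * u' i) + (b k (Fin.last d) : ℝ) * t) = 0 := by
          linear_combination h + (b k (Fin.last d) : ℝ) * hte
        rcases mul_eq_zero.mp this with h' | h'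
        · exact absurd h' heR
        · exact h'
    · push_neg at hex
      have hk : ∀ k, b k (Fin.last d) = 0 := hex
      set Pos := {j : ι // 0 < a j (Fin.last d)} with hPos
      set Neg := {j : ι // a j (Fin.last d) < 0} with hNeg
      set Zer := {j : ι // a j (Fin.last d) = 0} with hZer
      set a' : Zer ⊕ Pos × Neg → Fin d → ℤ := fun x =>
        Sum.elim (fun zj i => a zj.1 i.castSucc)
          (fun pq i => (-(a pq.2.1 (Fin.last d))) * a pq.1.1 i.castSucc
              + (a pq.1.1 (Fin.last d)) * a pq.2.1 i.castSucc) x with ha'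
      set b' : κ → Fin d → ℤ := fun k i => b k i.castSucc with hb'
      have hcert' : ∀ (n : Zer ⊕ Pos × Neg → ℕ) (z : κ → ℤ),
          (∑ j, (n j : ℤ) • a' j) + (∑ k, z k • b' k) = 0 → ∀ j, n j = 0 := by
        intro n z h0
        set N : ι → ℕ := fun j =>
          if hp : 0 < a j (Fin.last d) then
            ∑ q : Neg, n (Sum.inr (⟨j, hp⟩, q)) * (a q.1 (Fin.last d)).natAbs
          else if hq : a j (Fin.last d) < 0 then
            ∑ p : Pos, n (Sum.inr (p, ⟨j, hq⟩)) * (a p.1 (Fin.last d)).toNat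
          else n (Sum.inl ⟨j, by omega⟩) with hN
        have hsplit : ∀ c : Fin (d+1), ∑ j : ι, (N j : ℤ) * a j c =
            (∑ zj : Zer, (n (Sum.inl zj) : ℤ) * a zj.1 c)
            + ∑ pq : Pos × Neg, (n (Sum.inr pq) : ℤ) *
                ((-(a pq.2.1 (Fin.last d))) * a pq.1.1 c
                  + (a pq.1.1 (Fin.last d)) * a pq.2.1 c) := by
          intro c
          have hd23 : Disjoint (univ.filter (fun j => a j (Fin.last d) < 0))
              (univ.filter (fun j => a j (Fin.last d) = 0)) := by
            rw [Finset.disjoint_left]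
            intro j h2 h3
            simp only [mem_filter, mem_univ, true_and] at h2 h3
            omega
          have hd123 : Disjoint (univ.filter (fun j => 0 < a j (Fin.last d)))
              ((univ.filter (fun j => a j (Fin.last d) < 0))
                ∪ (univ.filter (fun j => a j (Fin.last d) = 0))) := by
            rw [Finset.disjoint_left]
            intro j h1 h23
            simp only [mem_filter, mem_union, mem_univ, true_and] at h1 h23
            omega
          have huniv : (univ.filter (fun j => 0 < a j (Fin.last d)))
              ∪ ((univ.filter (fun j => a j (Fin.last d) < 0))
                ∪ (univ.filter (fun j => a j (Fin.last d) = 0))) = univ := by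
            ext j
            simp only [mem_union, mem_filter, mem_univ, true_and, iff_true]
            omega
          have hstep : ∑ j : ι, (N j : ℤ) * a j c
              = (∑ j ∈ univ.filter (fun j => 0 < a j (Fin.last d)), (N j : ℤ) * a j c)
                + ((∑ j ∈ univ.filter (fun j => a j (Fin.last d) < 0), (N j : ℤ) * a j c)
                  + ∑ j ∈ univ.filter (fun j => a j (Fin.last d) = 0), (N j : ℤ) * a j c) := by
            rw [← Finset.sum_union hd23, ← Finset.sum_union hd123, huniv]
          rw [hstep]
          -- positive part
          have hpos : ∑ j ∈ univ.filter (fun j => 0 < a j (Fin.last d)), (N j : ℤ) * a j c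
              = ∑ pq : Pos × Neg, ((n (Sum.inr pq) : ℤ) * (a pq.2.1 (Fin.last d)).natAbs)
                  * a pq.1.1 c := by
            rw [Finset.sum_subtype (p := fun j => 0 < a j (Fin.last d))
              (univ.filter (fun j => 0 < a j (Fin.last d)))
              (by intro x; simp) (fun j => (N j : ℤ) * a j c)]
            rw [Fintype.sum_prod_type]
            refine Finset.sum_congr rfl fun p _ => ?_
            rw [hN]
            simp only
            rw [dif_pos p.2]
            push_cast
            rw [Finset.sum_mul]
          -- negative part
          have hneg : ∑ j ∈ univ.filter (fun j => a j (Fin.last d) < 0), (N j : ℤ) * a j c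
              = ∑ pq : Pos × Neg, ((n (Sum.inr pq) : ℤ) * (a pq.1.1 (Fin.last d)).toNat)
                  * a pq.2.1 c := by
            rw [Finset.sum_subtype (p := fun j => a j (Fin.last d) < 0)
              (univ.filter (fun j => a j (Fin.last d) < 0))
              (by intro x; simp) (fun j => (N j : ℤ) * a j c)]
            rw [Fintype.sum_prod_type]
            rw [Finset.sum_comm]
            refine Finset.sum_congr rfl fun q _ => ?_
            rw [hN]
            simp only
            rw [dif_neg (by omega : ¬ 0 < a q.1 (Fin.last d)), dif_pos q.2]
            push_cast
            rw [Finset.sum_mul]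
          -- zero part
          have hzer : ∑ j ∈ univ.filter (fun j => a j (Fin.last d) = 0), (N j : ℤ) * a j c
              = ∑ zj : Zer, (n (Sum.inl zj) : ℤ) * a zj.1 c := by
            rw [Finset.sum_subtype (p := fun j => a j (Fin.last d) = 0)
              (univ.filter (fun j => a j (Fin.last d) = 0))
              (by intro x; simp) (fun j => (N j : ℤ) * a j c)]
            refine Finset.sum_congr rfl fun zj _ => ?_
            rw [hN]
            simp only
            rw [dif_neg (by omega : ¬ 0 < a zj.1 (Fin.last d)),
              dif_neg (by omega : ¬ a zj.1 (Fin.last d) < 0)]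
          rw [hpos, hneg, hzer]
          rw [← add_assoc, ← Finset.sum_add_distrib]
          rw [add_comm]
          congr 1
          refine Finset.sum_congr rfl fun pq _ => ?_
          have h1 : ((a pq.2.1 (Fin.last d)).natAbs : ℤ) = -(a pq.2.1 (Fin.last d)) := by
            have := pq.2.2
            omega
          have h2 : ((a pq.1.1 (Fin.last d)).toNat : ℤ) = a pq.1.1 (Fin.last d) := by
            have := pq.1.2
            omega
          rw [h1, h2]
          ring
        intro x
        have key : (∑ j : ι, (N j : ℤ) • a j) + (∑ k, z k • b k) = 0 := by
          funext c
          simp only [Finset.sum_apply, Pi.add_apply, Pi.smul_apply, smul_eq_mul, Pi.zero_apply]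
          induction c using Fin.lastCases with
          | last =>
            rw [hsplit]
            have e1 : ∑ zj : Zer, (n (Sum.inl zj) : ℤ) * a zj.1 (Fin.last d) = 0 :=
              Finset.sum_eq_zero fun zj _ => by rw [zj.2, mul_zero]
            have e2 : ∑ pq : Pos × Neg, (n (Sum.inr pq) : ℤ) *
                ((-(a pq.2.1 (Fin.last d))) * a pq.1.1 (Fin.last d)
                  + (a pq.1.1 (Fin.last d)) * a pq.2.1 (Fin.last d)) = 0 :=
              Finset.sum_eq_zero fun pq _ => by ring
            have e3 : ∑ k, z k * b k (Fin.last d) = 0 :=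
              Finset.sum_eq_zero fun k _ => by rw [hk k, mul_zero]
            rw [e1, e2, e3]
            ring
          | cast i =>
            have h0i := congrFun h0 i
            simp only [Finset.sum_apply, Pi.add_apply, Pi.smul_apply, smul_eq_mul, Pi.zero_apply,
              ha', hb'] at h0i
            rw [Fintype.sum_sum_type] at h0i
            simp only [Sum.elim_inl, Sum.elim_inr] at h0i
            rw [hsplit]
            exact h0i
        have hz := hcert _ _ key
        rcases x with zj | pq
        · have := hz zj.1
          rw [hN] at this
          simp only at this
          rw [dif_neg (by omega : ¬ 0 < a zj.1 (Fin.last d)),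
            dif_neg (by omega : ¬ a zj.1 (Fin.last d) < 0)] at this
          exact this
        · obtain ⟨p, q⟩ := pq
          have := hz p.1
          rw [hN] at this
          simp only at this
          rw [dif_pos p.2] at this
          have h2 := (Finset.sum_eq_zero_iff.mp this) q (mem_univ q)
          have h3 : (a q.1 (Fin.last d)).natAbs ≠ 0 := by
            have := q.2
            omega
          exact (Nat.mul_eq_zero.mp h2).resolve_right h3
      obtain ⟨u', hu1, hu2⟩ := IH a' b' hcert'
      set A : ι → ℝ := fun j => ∑ i, (a j (Fin.castSucc i) : ℝ) * u' i with hA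
      have hAz : ∀ zj : Zer, 0 < A zj.1 := by
        intro zj
        have h := hu1 (Sum.inl zj)
        have hx : ∑ i, (a' (Sum.inl zj) i : ℝ) * u' i = A zj.1 := by
          rw [hA]
          refine Finset.sum_congr rfl fun i _ => ?_
          simp only [ha', Sum.elim_inl]
        rwa [hx] at h
      have hApq : ∀ pq : Pos × Neg,
          0 < (-(a pq.2.1 (Fin.last d) : ℝ)) * A pq.1.1 + (a pq.1.1 (Fin.last d) : ℝ) * A pq.2.1 := by
        intro pq
        have h := hu1 (Sum.inr pq)
        have hx : ∑ i, (a' (Sum.inr pq) i : ℝ) * u' i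
            = (-(a pq.2.1 (Fin.last d) : ℝ)) * A pq.1.1 - (-(a pq.1.1 (Fin.last d) : ℝ)) * A pq.2.1 := by
          rw [hA, ← sum_linR]
          refine Finset.sum_congr rfl fun i _ => ?_
          simp only [ha', Sum.elim_inr]
          push_cast
          ring
        rw [hx] at h
        linarith
      set L : Pos → ℝ := fun p => -A p.1 / (a p.1 (Fin.last d) : ℝ) with hL
      set U : Neg → ℝ := fun q => A q.1 / (-(a q.1 (Fin.last d) : ℝ)) with hU
      have hLU : ∀ p q, L p < U q := by
        intro p q
        have hx : (0:ℝ) < (a p.1 (Fin.last d) : ℝ) := by exact_mod_cast p.2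
        have hy : (0:ℝ) < -(a q.1 (Fin.last d) : ℝ) := by
          have : (a q.1 (Fin.last d) : ℝ) < 0 := by exact_mod_cast q.2
          linarith
        rw [hL, hU]
        simp only
        rw [div_lt_div_iff₀ hx hy]
        have := hApq (p, q)
        nlinarith [this]
      obtain ⟨t, ht1, ht2⟩ := exists_between_fam L U hLU
      refine ⟨Fin.snoc u' t, fun j => ?_, fun k => ?_⟩
      · rw [ip_snoc]
        rcases lt_trichotomy (a j (Fin.last d)) 0 with h | h | h
        · have hy : (0:ℝ) < -(a j (Fin.last d) : ℝ) := by
            have : (a j (Fin.last d) : ℝ) < 0 := by exact_mod_cast h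
            linarith
          have h2 := ht2 ⟨j, h⟩
          rw [hU] at h2
          simp only at h2
          have h3 := (lt_div_iff₀ hy).mp h2
          show (0:ℝ) < A j + (a j (Fin.last d) : ℝ) * t
          nlinarith [h3]
        · have hz : ((a j (Fin.last d) : ℤ) : ℝ) = 0 := by rw [h]; simp
          rw [hz, zero_mul, add_zero]
          exact hAz ⟨j, h⟩
        · have hx : (0:ℝ) < (a j (Fin.last d) : ℝ) := by exact_mod_cast h
          have h2 := ht1 ⟨j, h⟩
          rw [hL] at h2
          simp only at h2
          have h3 := (div_lt_iff₀ hx).mp h2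
          show (0:ℝ) < A j + (a j (Fin.last d) : ℝ) * t
          nlinarith [h3]
      · rw [ip_snoc]
        have h2 := hu2 k
        have hx : ∑ i, (b' k i : ℝ) * u' i = ∑ i, (b k (Fin.castSucc i) : ℝ) * u' i := by
          refine Finset.sum_congr rfl fun i _ => ?_
          simp only [hb']
        rw [hx] at h2
        have hz : ((b k (Fin.last d) : ℤ) : ℝ) = 0 := by rw [hk k]; simp
        rw [hz, zero_mul, add_zero]
        exact h2

/-- Let `P` be a finitely generated, cancellative, torsion-free and saturated commutative
additive monoid and `I` a prime monoid ideal of `P`. Then there is an additive monoid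
homomorphism `u : P → ℝ≥0` that is positive exactly on `I`. -/
theorem exists_addMonoidHom_pos_on_prime_monoidIdeal {P : Type*} [AddCancelCommMonoid P]
    [AddMonoid.FG P]
    (htf : ∀ (n : ℕ) (a b : P), 0 < n → n • a = n • b → a = b)
    (hsat : ∀ (n : ℕ) (a b : P), 0 < n → (∃ c : P, n • a = n • b + c) → ∃ q : P, a = b + q)
    (I : Set P) (hI : IsPrimeMonoidIdeal I) :
    ∃ u : P →+ ℝ≥0, (∀ p ∈ I, 0 < u p) ∧ ∀ p ∉ I, u p = 0 := by
  classical
  obtain ⟨hIdeal, hI0, hIadd⟩ := hI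
  obtain ⟨S, hS⟩ := (AddMonoid.FG.fg_top : (⊤ : AddSubmonoid P).FG)
  set m := S.card with hm
  set g : Fin m → P := fun i => (S.equivFin.symm i : P) with hg
  set σ : (Fin m → ℕ) → P := fun n => ∑ i, n i • g i with hσ
  have σ_add : ∀ n n', σ (n + n') = σ n + σ n' := by
    intro n n'
    simp only [hσ, Pi.add_apply, add_nsmul]
    rw [Finset.sum_add_distrib]
  have σ_single : ∀ i, σ (Pi.single i 1) = g i := by
    intro i
    simp only [hσ]
    rw [Finset.sum_eq_single i]
    · simp
    · intro j _ hj
      rw [Pi.single_eq_of_ne hj, zero_smul]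
    · intro h'
      exact absurd (mem_univ _) h'
  have σ_surj : ∀ p : P, ∃ n, σ n = p := by
    intro p
    have hp : p ∈ AddSubmonoid.closure (S : Set P) := by rw [hS]; trivial
    induction hp using AddSubmonoid.closure_induction with
    | mem x hx =>
      exact ⟨Pi.single (S.equivFin ⟨x, hx⟩) 1, by rw [σ_single, hg]; simp⟩
    | zero => exact ⟨0, by simp [hσ]⟩
    | add x y _ _ hx hy =>
      obtain ⟨n₁, h₁⟩ := hx
      obtain ⟨n₂, h₂⟩ := hy
      exact ⟨n₁ + n₂, by rw [σ_add, h₁, h₂]⟩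
  choose rep hrep using σ_surj
  -- nsmul and sum facts for the prime ideal complement
  have hsmul_not : ∀ (k : ℕ) (x : P), x ∉ I → k • x ∉ I := by
    intro k x hx
    induction k with
    | zero => rw [zero_nsmul]; exact hI0
    | succ k IHk => rw [succ_nsmul]; exact hIadd _ _ IHk hx
  have hF_sum : ∀ (n : Fin m → ℕ), (∀ i, 0 < n i → g i ∉ I) → σ n ∉ I := by
    intro n hn
    rw [hσ]
    refine Finset.sum_induction _ (fun x => x ∉ I) (fun x y hx hy => hIadd x y hx hy) hI0 ?_
    intro i _
    rcases Nat.eq_zero_or_pos (n i) with h | h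
    · rw [h, zero_nsmul]; exact hI0
    · exact hsmul_not _ _ (hn i h)
  have hI_mem : ∀ (n : Fin m → ℕ) (i : Fin m), 0 < n i → g i ∈ I → σ n ∈ I := by
    intro n i hpos hgi
    have hdecomp : n = Pi.single i 1 + (n - Pi.single i 1) := by
      funext j
      by_cases hji : j = i
      · subst hji; simp [Pi.single_eq_same]; omega
      · simp [Pi.single_eq_of_ne hji]
    rw [hdecomp, σ_add, σ_single]
    exact hIdeal _ hgi _
  -- the relation lattice
  set D : AddSubgroup (Fin m → ℤ) :=
    { carrier := {x | ∃ n₁ n₂ : Fin m → ℕ, σ n₁ = σ n₂ ∧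
        x = (fun i => (n₁ i : ℤ)) - (fun i => (n₂ i : ℤ))}
      zero_mem' := ⟨0, 0, rfl, by funext i; simp⟩
      add_mem' := by
        rintro x y ⟨n₁, n₂, h, rfl⟩ ⟨m₁, m₂, h', rfl⟩
        refine ⟨n₁ + m₁, n₂ + m₂, by rw [σ_add, σ_add, h, h'], ?_⟩
        funext i
        simp only [Pi.sub_apply, Pi.add_apply]
        push_cast
        ring
      neg_mem' := by
        rintro x ⟨n₁, n₂, h, rfl⟩
        refine ⟨n₂, n₁, h.symm, ?_⟩
        funext i
        simp only [Pi.sub_apply, Pi.neg_apply]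
        ring } with hD
  set Lmod : Submodule ℤ (Fin m → ℤ) := AddSubgroup.toIntSubmodule D with hLmod
  obtain ⟨T, hT⟩ : Lmod.FG := IsNoetherian.noetherian Lmod
  -- index types and the vectors
  set ι : Type := {i : Fin m // g i ∈ I} with hι
  set κ : Type := {x // x ∈ T} ⊕ {i : Fin m // g i ∉ I} with hκ
  set a : ι → Fin m → ℤ := fun j => Pi.single j.1 1 with ha
  set b : κ → Fin m → ℤ :=
    Sum.elim (fun t => (t.1 : Fin m → ℤ)) (fun i => Pi.single i.1 1) with hb
  have hyp : ∀ (n : ι → ℕ) (z : κ → ℤ),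
      (∑ j, (n j : ℤ) • a j) + (∑ k, z k • b k) = 0 → ∀ j, n j = 0 := by
    intro n z h0 j0
    by_contra hne
    set nn : Fin m → ℕ := fun i => if h : g i ∈ I then n ⟨i, h⟩ else 0 with hnn
    set z' : Fin m → ℤ := fun i => if h : g i ∉ I then z (Sum.inr ⟨i, h⟩) else 0 with hz'
    set vp : Fin m → ℕ := fun i => (z' i).toNat with hvp
    set vm : Fin m → ℕ := fun i => (-(z' i)).toNat with hvm
    set lam : Fin m → ℤ := ∑ t : {x // x ∈ T}, z (Sum.inl t) • (t.1 : Fin m → ℤ) with hlam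
    have hlmem : lam ∈ Lmod := by
      rw [hlam]
      exact Submodule.sum_mem _ fun t _ =>
        Submodule.smul_mem _ _ (hT ▸ Submodule.subset_span t.2)
    have hlD : lam ∈ D := by
      have := AddSubgroup.coe_toIntSubmodule D
      rw [hLmod] at hlmem
      exact by rw [← SetLike.mem_coe, ← this]; exact hlmem
    obtain ⟨n₁, n₂, hσ12, hdiff⟩ := hlD
    -- componentwise reading of h0
    have hcomp : ∀ i : Fin m, (nn i : ℤ) + (lam i + z' i) = 0 := by
      intro i
      have h0i := congrFun h0 i
      simp only [Finset.sum_apply, Pi.add_apply, Pi.smul_apply, smul_eq_mul,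
        Pi.zero_apply] at h0i
      rw [Fintype.sum_sum_type] at h0i
      have e1 : ∑ j : ι, (n j : ℤ) * a j i = (nn i : ℤ) := by
        by_cases h : g i ∈ I
        · rw [Finset.sum_eq_single (⟨i, h⟩ : ι)]
          · simp only [ha, hnn]
            rw [Pi.single_eq_same, dif_pos h, mul_one]
          · intro j _ hj
            have hji : i ≠ j.1 := fun hh => hj (Subtype.ext hh.symm)
            simp only [ha]
            rw [Pi.single_eq_of_ne hji, mul_zero]
          · intro h'
            exact absurd (mem_univ _) h'
        · rw [hnn]
          simp only [h, dif_neg, not_false_iff]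
          refine Finset.sum_eq_zero fun j _ => ?_
          have hji : i ≠ j.1 := fun hh => h (hh ▸ j.2)
          simp only [ha]
          rw [Pi.single_eq_of_ne hji, mul_zero]
      have e2 : ∑ t : {x // x ∈ T}, z (Sum.inl t) * b (Sum.inl t) i = lam i := by
        rw [hlam, Finset.sum_apply]
        refine Finset.sum_congr rfl fun t _ => ?_
        simp [hb]
      have e3 : ∑ i' : {i : Fin m // g i ∉ I}, z (Sum.inr i') * b (Sum.inr i') i = z' i := by
        by_cases h : g i ∉ I
        · rw [Finset.sum_eq_single (⟨i, h⟩ : {i : Fin m // g i ∉ I})]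
          · simp only [hb, hz', Sum.elim_inr]
            rw [Pi.single_eq_same, dif_pos h, mul_one]
          · intro j _ hj
            have hji : i ≠ j.1 := fun hh => hj (Subtype.ext hh.symm)
            simp only [hb, Sum.elim_inr]
            rw [Pi.single_eq_of_ne hji, mul_zero]
          · intro h'
            exact absurd (mem_univ _) h'
        · rw [hz']
          simp only [dif_neg h]
          refine Finset.sum_eq_zero fun j _ => ?_
          have hji : i ≠ j.1 := fun hh => h (hh ▸ j.2)
          simp only [hb, Sum.elim_inr]
          rw [Pi.single_eq_of_ne hji, mul_zero]
      rw [e1, e2, e3] at h0i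
      exact h0i
    have hNat : ∀ i, nn i + n₁ i + vp i = n₂ i + vm i := by
      intro i
      have h1 := hcomp i
      have h2 := congrFun hdiff i
      simp only [Pi.sub_apply] at h2
      rw [hvp, hvm]
      simp only
      omega
    have hfun : nn + n₁ + vp = n₂ + vm := by
      funext i
      simp only [Pi.add_apply]
      exact hNat i
    have hσeq := congrArg σ hfun
    rw [σ_add, σ_add, σ_add] at hσeq
    have hkey : σ nn + σ vp = σ vm := by
      have h3 : (σ nn + σ vp) + σ n₁ = σ vm + σ n₁ := by
        calc (σ nn + σ vp) + σ n₁ = σ nn + σ n₁ + σ vp := by abel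
        _ = σ n₂ + σ vm := hσeq
        _ = σ vm + σ n₁ := by rw [← hσ12]; abel
      exact add_right_cancel h3
    have hmemI : σ nn ∈ I := by
      refine hI_mem nn j0.1 ?_ j0.2
      rw [hnn]
      simp only
      rw [dif_pos j0.2]
      exact Nat.pos_of_ne_zero hne
    have hinI : σ vm ∈ I := by
      rw [← hkey]
      exact hIdeal _ hmemI _
    have hnotI : σ vm ∉ I := by
      refine hF_sum vm fun i hpos hgi => ?_
      rw [hvm, hz'] at hpos
      simp only at hpos
      rw [dif_neg (not_not.mpr hgi)] at hpos
      simp at hpos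
    exact hnotI hinI
  obtain ⟨w, hw1, hw2⟩ := motzkin m a b hyp
  have hw_single : ∀ i : Fin m, ∑ i', ((Pi.single i (1:ℤ) : Fin m → ℤ) i' : ℝ) * w i' = w i := by
    intro i
    rw [Finset.sum_eq_single i]
    · rw [Pi.single_eq_same]; simp
    · intro j _ hj
      rw [Pi.single_eq_of_ne hj]; simp
    · intro h'
      exact absurd (mem_univ _) h'
  have hwI : ∀ i : Fin m, g i ∈ I → 0 < w i := by
    intro i h
    have h2 := hw1 ⟨i, h⟩
    simp only [ha] at h2
    rwa [hw_single i] at h2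
  have hwF : ∀ i : Fin m, g i ∉ I → w i = 0 := by
    intro i h
    have h2 := hw2 (Sum.inr ⟨i, h⟩)
    simp only [hb, Sum.elim_inr] at h2
    rwa [hw_single i] at h2
  have hw_nonneg : ∀ i, 0 ≤ w i := fun i => by
    by_cases h : g i ∈ I
    · exact le_of_lt (hwI i h)
    · rw [hwF i h]
  set φ : (Fin m → ℤ) → ℝ := fun x => ∑ i, (x i : ℝ) * w i with hφ
  have φ_add : ∀ x y, φ (x + y) = φ x + φ y := by
    intro x y
    simp only [hφ, Pi.add_apply]
    rw [← Finset.sum_add_distrib]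
    refine Finset.sum_congr rfl fun i _ => ?_
    push_cast
    ring
  have φ_sub : ∀ x y, φ (x - y) = φ x - φ y := by
    intro x y
    simp only [hφ, Pi.sub_apply]
    rw [← Finset.sum_sub_distrib]
    refine Finset.sum_congr rfl fun i _ => ?_
    push_cast
    ring
  have φ_smul : ∀ (c : ℤ) (x), φ (c • x) = c * φ x := by
    intro c x
    simp only [hφ, Pi.smul_apply, smul_eq_mul]
    rw [Finset.mul_sum]
    refine Finset.sum_congr rfl fun i _ => ?_
    push_cast
    ring
  have φ_zeroL : ∀ x ∈ Lmod, φ x = 0 := by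
    intro x hx
    rw [← hT] at hx
    induction hx using Submodule.span_induction with
    | mem y hyT =>
      have h2 := hw2 (Sum.inl ⟨y, hyT⟩)
      simpa only [hb, Sum.elim_inl] using h2
    | zero => simp [hφ]
    | add x y _ _ hx hy => rw [φ_add, hx, hy, add_zero]
    | smul c x _ hx => rw [φ_smul, hx, mul_zero]
  have hDtoL : ∀ x, x ∈ D → x ∈ Lmod := by
    intro x hx
    rw [hLmod, ← SetLike.mem_coe, AddSubgroup.coe_toIntSubmodule]
    exact hx
  set v : P → ℝ := fun p => φ (fun i => (rep p i : ℤ)) with hv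
  have hv_eq : ∀ (p : P) (n : Fin m → ℕ), σ n = p → v p = φ (fun i => (n i : ℤ)) := by
    intro p n hn
    have hmem : ((fun i => ((rep p) i : ℤ)) - fun i => (n i : ℤ)) ∈ Lmod :=
      hDtoL _ ⟨rep p, n, by rw [hrep p, hn], rfl⟩
    have h2 := φ_zeroL _ hmem
    rw [φ_sub] at h2
    rw [hv]
    linarith
  have v_add : ∀ p q, v (p + q) = v p + v q := by
    intro p q
    have h1 : σ (rep p + rep q) = p + q := by rw [σ_add, hrep, hrep]
    rw [hv_eq (p + q) _ h1]
    have h2 : (fun i => (((rep p + rep q) i : ℕ) : ℤ))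
        = (fun i => ((rep p i : ℕ) : ℤ)) + fun i => ((rep q i : ℕ) : ℤ) := by
      funext i
      simp only [Pi.add_apply]
      push_cast
      ring
    rw [h2, φ_add]
  have v_zero : v 0 = 0 := by
    have h1 : σ 0 = 0 := by simp [hσ]
    rw [hv_eq 0 0 h1]
    simp [hφ]
  have v_nonneg : ∀ p, 0 ≤ v p := by
    intro p
    simp only [hv, hφ]
    exact Finset.sum_nonneg fun i _ =>
      mul_nonneg (by exact_mod_cast Nat.zero_le _) (hw_nonneg i)
  have v_posI : ∀ p ∈ I, 0 < v p := by
    intro p hp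
    have hex : ∃ i, 0 < rep p i ∧ g i ∈ I := by
      by_contra hno
      push_neg at hno
      exact (hF_sum (rep p) hno) ((hrep p).symm ▸ hp)
    obtain ⟨i, hpos, hgi⟩ := hex
    simp only [hv, hφ]
    have hterm : 0 < ((rep p i : ℤ) : ℝ) * w i :=
      mul_pos (by exact_mod_cast hpos) (hwI i hgi)
    refine lt_of_lt_of_le hterm ?_
    exact Finset.single_le_sum
      (f := fun i => ((rep p i : ℤ) : ℝ) * w i)
      (fun i _ => mul_nonneg (by exact_mod_cast Nat.zero_le _) (hw_nonneg i)) (mem_univ i)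
  have v_zeroF : ∀ p ∉ I, v p = 0 := by
    intro p hp
    simp only [hv, hφ]
    refine Finset.sum_eq_zero fun i _ => ?_
    rcases Nat.eq_zero_or_pos (rep p i) with h | h
    · rw [h]; simp
    · have hgi : g i ∉ I := fun hgi => hp ((hrep p) ▸ hI_mem (rep p) i h hgi)
      rw [hwF i hgi, mul_zero]
  refine ⟨⟨⟨fun p => ⟨v p, v_nonneg p⟩, ?_⟩, ?_⟩, ?_, ?_⟩
  · exact NNReal.coe_injective (by show v 0 = ((0:ℝ≥0):ℝ); simpa using v_zero)
  · intro p q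
    exact NNReal.coe_injective (by push_cast; exact v_add p q)
  · intro p hp
    have := v_posI p hp
    exact NNReal.coe_lt_coe.mp (by show ((0:ℝ≥0):ℝ) < v p; simpa using this)
  · intro p hp
    exact NNReal.coe_injective (by show v p = ((0:ℝ≥0):ℝ); simpa using v_zeroF p hp)
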